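/- For all integers n ≥ 1, d ≥ 1 and j ≥ 1 with j ≤ ⌊n/d⌋ =: i, the number of permutations in S_n whose cycle decomposition contains precisely j cycles of length d equals n!·b(i,j); that is, #ℬ_n(d,j) = n!·b(i,j) = (n!/(j!·d^j))·(1 − a(i−j)). -/

import Mathlib

/-- The length of the cycle of the permutation `g` on which the point `x` lies
(a fixed point lies on a cycle of length 1): the cardinality of the orbit of `x`
under `g`, i.e. of the set of points lying on the same cycle as `x`. -/
noncomputable def cycleLengthAt {n : ℕ} (g : Equiv.Perm (Fin n)) (x : Fin n) : ℕ :=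
  Nat.card {y : Fin n // g.SameCycle x y}

/-- `g` contains precisely `j` cycles of length `d` if and only if precisely `j * d`
points lie on cycles of length `d`. -/
def hasPreciselyCycles {n : ℕ} (g : Equiv.Perm (Fin n)) (d j : ℕ) : Prop :=
  Nat.card {x : Fin n // cycleLengthAt g x = d} = j * d


open Equiv Function Finset
set_option linter.unusedSectionVars false
namespace StmtAux

noncomputable def cyl {α : Type*} (g : Equiv.Perm α) (x : α) : ℕ :=
  Nat.card {y : α // g.SameCycle x y}

def hpc {α : Type*} (g : Equiv.Perm α) (d j : ℕ) : Prop :=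
  Nat.card {x : α // cyl g x = d} = j * d

variable {α β : Type*} [Fintype α] [DecidableEq α]

lemma mem_periodicPts (g : Equiv.Perm α) (x : α) : x ∈ Function.periodicPts ⇑g :=
  ⟨orderOf g, orderOf_pos g, by
    show (⇑g)^[orderOf g] x = x
    rw [Equiv.Perm.iterate_eq_pow, pow_orderOf_eq_one]; rfl⟩

lemma cyl_eq_minimalPeriod (g : Equiv.Perm α) (x : α) :
    cyl g x = Function.minimalPeriod ⇑g x := by
  set m := Function.minimalPeriod ⇑g x with hm
  have hmpos : 0 < m := Function.minimalPeriod_pos_of_mem_periodicPts (mem_periodicPts g x)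
  have hF : Function.Bijective (fun k : Fin m => (⟨(g ^ (k : ℕ)) x,
      ⟨(k : ℕ), by simp [zpow_natCast]⟩⟩ : {y : α // g.SameCycle x y})) := by
    constructor
    · intro a b hab
      have : (g ^ (a : ℕ)) x = (g ^ (b : ℕ)) x := congrArg Subtype.val hab
      have := Function.iterate_injOn_Iio_minimalPeriod (f := ⇑g) (x := x)
        (by exact a.2) (by exact b.2) (by simp only [Equiv.Perm.iterate_eq_pow]; exact this)
      exact Fin.ext this
    · rintro ⟨y, hy⟩
      obtain ⟨i, hi, rfl⟩ := hy.exists_pow_eq'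
      refine ⟨⟨i % m, Nat.mod_lt _ hmpos⟩, ?_⟩
      apply Subtype.ext
      show (g ^ (i % m)) x = (g ^ i) x
      rw [← Equiv.Perm.iterate_eq_pow, ← Equiv.Perm.iterate_eq_pow]
      exact Function.iterate_mod_minimalPeriod_eq
  calc cyl g x = Nat.card (Fin m) := (Nat.card_eq_of_bijective _ hF).symm
    _ = m := by simp

lemma cyl_pos (g : Equiv.Perm α) (x : α) : 0 < cyl g x := by
  rw [cyl_eq_minimalPeriod]
  exact Function.minimalPeriod_pos_of_mem_periodicPts (mem_periodicPts g x)

lemma pow_cyl_apply (g : Equiv.Perm α) (x : α) : (g ^ cyl g x) x = x := by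
  rw [cyl_eq_minimalPeriod, ← Equiv.Perm.iterate_eq_pow]
  exact Function.iterate_minimalPeriod

lemma pow_mod_cyl_apply (g : Equiv.Perm α) (x : α) (k : ℕ) :
    (g ^ (k % cyl g x)) x = (g ^ k) x := by
  rw [cyl_eq_minimalPeriod, ← Equiv.Perm.iterate_eq_pow, ← Equiv.Perm.iterate_eq_pow]
  exact Function.iterate_mod_minimalPeriod_eq

lemma cyl_injOn (g : Equiv.Perm α) (x : α) :
    Set.InjOn (fun k : ℕ => (g ^ k) x) (Set.Iio (cyl g x)) := by
  rw [cyl_eq_minimalPeriod]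
  intro a ha b hb hab
  exact Function.iterate_injOn_Iio_minimalPeriod ha hb
    (by simp only [Equiv.Perm.iterate_eq_pow]; exact hab)

lemma sameCycle_iff_exists_lt (g : Equiv.Perm α) (x y : α) :
    g.SameCycle x y ↔ ∃ k < cyl g x, (g ^ k) x = y := by
  constructor
  · intro hy
    obtain ⟨i, hi, rfl⟩ := hy.exists_pow_eq'
    exact ⟨i % cyl g x, Nat.mod_lt _ (cyl_pos g x), pow_mod_cyl_apply g x i⟩
  · rintro ⟨k, _, rfl⟩
    exact ⟨(k : ℤ), by simp [zpow_natCast]⟩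

lemma cyl_of_sameCycle {g : Equiv.Perm α} {x y : α} (h : g.SameCycle x y) :
    cyl g x = cyl g y :=
  Nat.card_congr (Equiv.subtypeEquivRight fun _ => ⟨h.symm.trans, h.trans⟩)

lemma cyl_eq_of_pow_eq {g : Equiv.Perm α} {x : α} {d : ℕ} (hd : 0 < d)
    (h1 : (g ^ d) x = x) (h2 : Set.InjOn (fun k : ℕ => (g ^ k) x) (Set.Iio d)) :
    cyl g x = d := by
  rw [cyl_eq_minimalPeriod]
  have hper : Function.IsPeriodicPt ⇑g d x := by
    show (⇑g)^[d] x = x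
    rw [Equiv.Perm.iterate_eq_pow]; exact h1
  have hle : Function.minimalPeriod ⇑g x ≤ d := hper.minimalPeriod_le hd
  rcases lt_or_eq_of_le hle with hlt | heq
  · exfalso
    have h0 : (g ^ (0 : ℕ)) x = (g ^ Function.minimalPeriod ⇑g x) x := by
      rw [← Equiv.Perm.iterate_eq_pow, ← Equiv.Perm.iterate_eq_pow]
      simp [Function.iterate_minimalPeriod]
    have := h2 (Set.mem_Iio.2 hd) (Set.mem_Iio.2 hlt) h0
    rw [← this] at hlt
    exact absurd (cyl_eq_minimalPeriod g x ▸ cyl_pos g x) (by omega)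
  · exact heq

-- permCongr as a MulEquiv
def permCongrM (e : α ≃ β) : Equiv.Perm α ≃* Equiv.Perm β :=
  { e.permCongr with
    map_mul' := fun g h => by
      ext b
      simp [Equiv.permCongr_apply] }

lemma permCongr_zpow (e : α ≃ β) (g : Equiv.Perm α) (i : ℤ) :
    e.permCongr (g ^ i) = (e.permCongr g) ^ i :=
  map_zpow (permCongrM e) g i

lemma sameCycle_permCongr (e : α ≃ β) (g : Equiv.Perm α) (x y : α) :
    (e.permCongr g).SameCycle (e x) (e y) ↔ g.SameCycle x y := by
  constructor
  · rintro ⟨i, hi⟩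
    refine ⟨i, e.injective ?_⟩
    rw [← hi, ← permCongr_zpow]
    simp [Equiv.permCongr_apply]
  · rintro ⟨i, hi⟩
    refine ⟨i, ?_⟩
    rw [← permCongr_zpow]
    simp [Equiv.permCongr_apply, hi]

lemma cyl_permCongr (e : α ≃ β) (g : Equiv.Perm α) (x : α) :
    cyl (e.permCongr g) (e x) = cyl g x :=
  (Nat.card_congr (e.subtypeEquiv fun y => (sameCycle_permCongr e g x y).symm)).symm

lemma hpc_permCongr (e : α ≃ β) (g : Equiv.Perm α) (d j : ℕ) :
    hpc (e.permCongr g) d j ↔ hpc g d j := by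
  unfold hpc
  rw [Nat.card_congr (e.subtypeEquiv fun x => ?_)]
  rw [cyl_permCongr]

lemma card_hpc_congr (e : α ≃ β) (d j : ℕ) :
    Nat.card {g : Equiv.Perm α // hpc g d j} = Nat.card {g : Equiv.Perm β // hpc g d j} :=
  Nat.card_congr ((e.permCongr).subtypeEquiv fun g => (hpc_permCongr e g d j).symm)

-- cyl under subtypePerm on an invariant predicate
lemma sameCycle_subtypePerm (g : Equiv.Perm α) (p : α → Prop)
    (hp : ∀ z, p z ↔ p (g z)) {y z : α} (hy : p y) (hz : p z) :
    (g.subtypePerm (fun z => (hp z).symm)).SameCycle ⟨y, hy⟩ ⟨z, hz⟩ ↔ g.SameCycle y z := by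
  constructor
  · rintro ⟨i, hi⟩
    refine ⟨i, ?_⟩
    rw [Equiv.Perm.subtypePerm_zpow] at hi
    simpa [Subtype.ext_iff] using hi
  · rintro ⟨i, hi⟩
    refine ⟨i, ?_⟩
    rw [Equiv.Perm.subtypePerm_zpow]
    simpa [Subtype.ext_iff] using hi

lemma p_of_sameCycle (g : Equiv.Perm α) (p : α → Prop)
    (hp : ∀ z, p z ↔ p (g z)) {y z : α} (hy : p y) (h : g.SameCycle y z) : p z := by
  have key : ∀ k : ℕ, p ((g ^ k) y) := by
    intro k
    induction k with
    | zero => simpa using hy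
    | succ k ih =>
      rw [pow_succ']
      exact (hp _).1 ih
  obtain ⟨k, -, rfl⟩ := (sameCycle_iff_exists_lt g y z).1 h
  exact key k

lemma cyl_subtypePerm (g : Equiv.Perm α) (p : α → Prop)
    (hp : ∀ z, p z ↔ p (g z)) (y : α) (hy : p y) :
    cyl (g.subtypePerm (fun z => (hp z).symm)) ⟨y, hy⟩ = cyl g y := by
  refine Nat.card_congr ?_
  refine
    { toFun := fun w => ⟨w.1.1, ((sameCycle_subtypePerm g p hp hy w.1.2).1 w.2)⟩
      invFun := fun z => ⟨⟨z.1, p_of_sameCycle g p hp hy z.2⟩,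
        (sameCycle_subtypePerm g p hp hy _).2 z.2⟩
      left_inv := fun w => by ext; rfl
      right_inv := fun z => by ext; rfl }


lemma ncard_filter (p : α → Prop) [DecidablePred p] :
    Nat.card {x : α // p x} = (univ.filter p).card := by
  rw [Nat.card_eq_fintype_card, Fintype.card_subtype]

-- the set of points on d-cycles has cardinality divisible by d
lemma dvd_card_cylSet (g : Equiv.Perm α) (d : ℕ) :
    ∃ t : ℕ, Nat.card {x : α // cyl g x = d} = t * d := by
  classical
  have hfil : Nat.card {x : α // cyl g x = d} = (univ.filter fun x => cyl g x = d).card :=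
    ncard_filter _
  set S : Finset α := univ.filter fun x => cyl g x = d with hS
  set orb : α → Finset α := fun x => univ.filter fun y => g.SameCycle x y with horb
  have horbcard : ∀ x : α, (orb x).card = cyl g x := by
    intro x
    rw [horb]
    exact (ncard_filter _).symm
  have hmem : ∀ x ∈ S, orb x ∈ S.image orb := fun x hx => Finset.mem_image_of_mem _ hx
  have hfib : ∀ t ∈ S.image orb, (S.filter fun y => orb y = t) = t := by
    intro t ht
    obtain ⟨x₀, hx₀S, rfl⟩ := Finset.mem_image.1 ht
    have hx₀d : cyl g x₀ = d := (Finset.mem_filter.1 hx₀S).2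
    ext y
    simp only [Finset.mem_filter, Finset.mem_univ, true_and, hS, orb]
    constructor
    · rintro ⟨-, hy⟩
      have : y ∈ univ.filter fun z => g.SameCycle y z := by
        simp [Equiv.Perm.SameCycle.refl]
      rw [hy] at this
      simpa using this
    · intro hxy
      refine ⟨?_, ?_⟩
      · rw [← cyl_of_sameCycle hxy, hx₀d]
      · ext z
        simp only [Finset.mem_filter, Finset.mem_univ, true_and]
        exact ⟨hxy.trans, hxy.symm.trans⟩
  have := Finset.card_eq_sum_card_fiberwise hmem
  refine ⟨(S.image orb).card, ?_⟩
  rw [hfil, this]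
  have hcard : ∀ t ∈ S.image orb, (S.filter fun y => orb y = t).card = d := by
    intro t ht
    rw [hfib t ht]
    obtain ⟨x₀, hx₀S, rfl⟩ := Finset.mem_image.1 ht
    rw [horbcard, (Finset.mem_filter.1 hx₀S).2]
  rw [Finset.sum_congr rfl hcard, Finset.sum_const, smul_eq_mul]

lemma hpc_iff (g : Equiv.Perm α) {d : ℕ} (hd : 0 < d) (j : ℕ) :
    hpc g d j ↔ j = Nat.card {x : α // cyl g x = d} / d := by
  obtain ⟨t, ht⟩ := dvd_card_cylSet g d
  unfold hpc
  rw [ht, Nat.mul_div_cancel _ hd]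
  constructor
  · intro h
    exact (Nat.eq_of_mul_eq_mul_right hd h).symm
  · rintro rfl; rfl

lemma sum_card_hpc (d : ℕ) (hd : 0 < d) :
    ∑ j ∈ Finset.range (Fintype.card α / d + 1),
      Nat.card {g : Equiv.Perm α // hpc g d j} = Nat.factorial (Fintype.card α) := by
  classical
  have h1 : ∀ j, Nat.card {g : Equiv.Perm α // hpc g d j}
      = ((univ : Finset (Equiv.Perm α)).filter fun g => hpc g d j).card := fun j =>
    ncard_filter _
  simp only [h1]
  have hmap : ∀ g ∈ (univ : Finset (Equiv.Perm α)),
      (Nat.card {x : α // cyl g x = d} / d) ∈ Finset.range (Fintype.card α / d + 1) := by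
    intro g _
    rw [Finset.mem_range, Nat.lt_succ_iff]
    apply Nat.div_le_div_right
    calc Nat.card {x : α // cyl g x = d} = (univ.filter fun x => cyl g x = d).card :=
          ncard_filter _
      _ ≤ Fintype.card α := by
          simpa using Finset.card_filter_le univ _
  calc ∑ j ∈ Finset.range (Fintype.card α / d + 1),
        ((univ : Finset (Equiv.Perm α)).filter fun g => hpc g d j).card
      = ∑ j ∈ Finset.range (Fintype.card α / d + 1),
        ((univ : Finset (Equiv.Perm α)).filter
          fun g => (Nat.card {x : α // cyl g x = d} / d) = j).card := by
        refine Finset.sum_congr rfl fun j _ => ?_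
        congr 1
        ext g
        simp only [Finset.mem_filter, Finset.mem_univ, true_and]
        rw [hpc_iff g hd j]
        exact eq_comm
    _ = (univ : Finset (Equiv.Perm α)).card :=
        (Finset.card_eq_sum_card_fiberwise hmap).symm
    _ = Nat.factorial (Fintype.card α) := by
        rw [Finset.card_univ, Fintype.card_perm]

-- splitting off one cycle
lemma ncard_and_compl (q r : α → Prop) :
    Nat.card {z : α // q z} =
      Nat.card {z : α // q z ∧ r z} + Nat.card {z : α // q z ∧ ¬ r z} := by
  classical
  rw [ncard_filter, ncard_filter, ncard_filter]
  rw [← Finset.card_filter_add_card_filter_not (s := univ.filter q) (p := r),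
    Finset.filter_filter, Finset.filter_filter]

lemma split_cycle {g : Equiv.Perm α} {x : α} {d : ℕ} (hd : 0 < d) (hx : cyl g x = d)
    (s : Set α) (hs : ∀ z, z ∈ s ↔ g.SameCycle x z) :
    Nat.card {z : α // cyl g z = d}
      = d + Nat.card {z : α // cyl g z = d ∧ z ∉ s} := by
  rw [ncard_and_compl (fun z => cyl g z = d) (· ∈ s)]
  congr 1
  have : ∀ z : α, (cyl g z = d ∧ z ∈ s) ↔ g.SameCycle x z := by
    intro z
    constructor
    · rintro ⟨-, hz⟩; exact (hs z).1 hz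
    · intro h
      exact ⟨by rw [← cyl_of_sameCycle h, hx], (hs z).2 h⟩
  rw [Nat.card_congr (Equiv.subtypeEquivRight this), ← hx]
  rfl

lemma finRotate_val {d : ℕ} (i : Fin d) : ((finRotate d i : Fin d) : ℕ) = ((i : ℕ) + 1) % d := by
  rcases d with - | e
  · exact absurd i.2 (by omega)
  · rw [finRotate_succ_apply]
    rcases i with ⟨iv, hiv⟩
    rw [Fin.add_def]
    simp

section Bij

variable {α : Type*} [Fintype α] [DecidableEq α] {d j : ℕ}

noncomputable def bwdPerm (f : Fin d ↪ α) [DecidablePred (· ∈ Set.range ⇑f)]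
    (g' : Equiv.Perm {y : α // y ∉ Set.range ⇑f}) : Equiv.Perm α :=
  Equiv.Perm.subtypeCongr ((Equiv.ofInjective ⇑f f.injective).permCongr (finRotate d)) g'

lemma bwdPerm_apply_mem (f : Fin d ↪ α) [DecidablePred (· ∈ Set.range ⇑f)]
    (g' : Equiv.Perm {y : α // y ∉ Set.range ⇑f}) (k : Fin d) :
    bwdPerm f g' (f k) = f (finRotate d k) := by
  have h : f k ∈ Set.range ⇑f := Set.mem_range_self k
  rw [bwdPerm, Equiv.Perm.subtypeCongr.left_apply _ _ h]
  have : (⟨f k, h⟩ : {y : α // y ∈ Set.range ⇑f}) = Equiv.ofInjective ⇑f f.injective k := by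
    simp [Equiv.ofInjective_apply]
  rw [this]
  simp [Equiv.permCongr_apply]

lemma bwdPerm_apply_not_mem (f : Fin d ↪ α) [DecidablePred (· ∈ Set.range ⇑f)]
    (g' : Equiv.Perm {y : α // y ∉ Set.range ⇑f}) {y : α} (h : y ∉ Set.range ⇑f) :
    bwdPerm f g' y = g' ⟨y, h⟩ :=
  Equiv.Perm.subtypeCongr.right_apply _ _ h

lemma bwdPerm_pow (f : Fin d ↪ α) [DecidablePred (· ∈ Set.range ⇑f)]
    (g' : Equiv.Perm {y : α // y ∉ Set.range ⇑f}) (hd : 0 < d) (k : ℕ) :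
    (bwdPerm f g' ^ k) (f ⟨0, hd⟩) = f ⟨k % d, Nat.mod_lt _ hd⟩ := by
  induction k with
  | zero => simp [Fin.ext_iff, Nat.zero_mod]
  | succ k ih =>
    rw [pow_succ', Equiv.Perm.mul_apply, ih, bwdPerm_apply_mem]
    congr 1
    rw [Fin.ext_iff, finRotate_val]
    exact Nat.mod_add_mod k d 1

lemma bwdPerm_cyl_base (f : Fin d ↪ α) [DecidablePred (· ∈ Set.range ⇑f)]
    (g' : Equiv.Perm {y : α // y ∉ Set.range ⇑f}) (hd : 0 < d) :
    cyl (bwdPerm f g') (f ⟨0, hd⟩) = d := by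
  refine cyl_eq_of_pow_eq hd ?_ ?_
  · rw [bwdPerm_pow f g' hd]
    congr 1
    rw [Fin.ext_iff]
    simp [Nat.mod_self]
  · intro a ha b hb hab
    simp only [Set.mem_Iio] at ha hb
    have hab : (bwdPerm f g' ^ a) (f ⟨0, hd⟩) = (bwdPerm f g' ^ b) (f ⟨0, hd⟩) := hab
    rw [bwdPerm_pow f g' hd, bwdPerm_pow f g' hd] at hab
    have := f.injective hab
    rw [Fin.ext_iff] at this
    simp only [Nat.mod_eq_of_lt ha, Nat.mod_eq_of_lt hb] at this
    exact this

lemma bwdPerm_sameCycle_iff (f : Fin d ↪ α) [DecidablePred (· ∈ Set.range ⇑f)]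
    (g' : Equiv.Perm {y : α // y ∉ Set.range ⇑f}) (hd : 0 < d) (z : α) :
    (bwdPerm f g').SameCycle (f ⟨0, hd⟩) z ↔ z ∈ Set.range ⇑f := by
  constructor
  · intro h
    obtain ⟨k, hk, rfl⟩ := (sameCycle_iff_exists_lt _ _ _).1 h
    rw [bwdPerm_pow f g' hd]
    exact Set.mem_range_self _
  · rintro ⟨k, rfl⟩
    refine ⟨(k : ℕ), ?_⟩
    rw [zpow_natCast, bwdPerm_pow f g' hd]
    congr 1
    rw [Fin.ext_iff]
    exact Nat.mod_eq_of_lt k.2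

lemma bwdPerm_invariant (f : Fin d ↪ α) [DecidablePred (· ∈ Set.range ⇑f)]
    (g' : Equiv.Perm {y : α // y ∉ Set.range ⇑f}) :
    ∀ z, (z ∉ Set.range ⇑f) ↔ (bwdPerm f g' z ∉ Set.range ⇑f) := by
  intro z
  rw [not_iff_not]
  constructor
  · rintro ⟨k, rfl⟩
    rw [bwdPerm_apply_mem]
    exact Set.mem_range_self _
  · rintro ⟨k, hk⟩
    have h2 : bwdPerm f g' (f ((finRotate d).symm k)) = f k := by
      rw [bwdPerm_apply_mem]
      rw [Equiv.apply_symm_apply]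
    have := (bwdPerm f g').injective (hk.symm ▸ h2)
    rw [← this]
    exact Set.mem_range_self _

lemma bwdPerm_subtypePerm (f : Fin d ↪ α) [DecidablePred (· ∈ Set.range ⇑f)]
    (g' : Equiv.Perm {y : α // y ∉ Set.range ⇑f}) :
    (bwdPerm f g').subtypePerm (fun z => (bwdPerm_invariant f g' z).symm) = g' := by
  ext y
  rcases y with ⟨y, hy⟩
  simp only [Equiv.Perm.subtypePerm_apply]
  rw [bwdPerm_apply_not_mem f g' hy]

lemma bwdPerm_cyl_not_mem (f : Fin d ↪ α) [DecidablePred (· ∈ Set.range ⇑f)]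
    (g' : Equiv.Perm {y : α // y ∉ Set.range ⇑f}) {y : α} (h : y ∉ Set.range ⇑f) :
    cyl (bwdPerm f g') y = cyl g' ⟨y, h⟩ := by
  conv_rhs => rw [← bwdPerm_subtypePerm f g']
  rw [cyl_subtypePerm _ _ (bwdPerm_invariant f g')]

lemma bwdPerm_hpc (f : Fin d ↪ α) [DecidablePred (· ∈ Set.range ⇑f)]
    (g' : Equiv.Perm {y : α // y ∉ Set.range ⇑f}) (hd : 0 < d) (hj : 1 ≤ j)
    (hg' : hpc g' d (j - 1)) : hpc (bwdPerm f g') d j := by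
  unfold hpc
  rw [split_cycle hd (bwdPerm_cyl_base f g' hd) (Set.range ⇑f)
    (fun z => (bwdPerm_sameCycle_iff f g' hd z).symm)]
  have he : Nat.card {z : α // cyl (bwdPerm f g') z = d ∧ z ∉ Set.range ⇑f}
      = Nat.card {w : {y : α // y ∉ Set.range ⇑f} // cyl g' w = d} := by
    refine Nat.card_congr ?_
    refine
      { toFun := fun z => ⟨⟨z.1, z.2.2⟩, by
          rw [← bwdPerm_cyl_not_mem f g' z.2.2]; exact z.2.1⟩
        invFun := fun w => ⟨w.1.1, by
          rw [bwdPerm_cyl_not_mem f g' w.1.2]; exact ⟨w.2, w.1.2⟩⟩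
        left_inv := fun z => by ext; rfl
        right_inv := fun w => by ext; rfl }
  rw [he, hg']
  obtain ⟨j, rfl⟩ : ∃ j', j = j' + 1 := ⟨j - 1, by omega⟩
  simp [Nat.succ_mul, Nat.add_comm]

end Bij

section Bij2

variable {α : Type*} [Fintype α] [DecidableEq α] {d j : ℕ}

def fwdEmb (g : Equiv.Perm α) (x : α) (hx : cyl g x = d) : Fin d ↪ α :=
  ⟨fun k => (g ^ (k : ℕ)) x, by
    intro a b hab
    have hab : (g ^ (a : ℕ)) x = (g ^ (b : ℕ)) x := hab
    refine Fin.ext (cyl_injOn g x ?_ ?_ hab) <;>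
      · rw [Set.mem_Iio, hx]; exact Fin.is_lt _⟩

lemma fwdEmb_apply (g : Equiv.Perm α) (x : α) (hx : cyl g x = d) (k : Fin d) :
    fwdEmb g x hx k = (g ^ (k : ℕ)) x := rfl

lemma fwdEmb_range (g : Equiv.Perm α) (x : α) (hx : cyl g x = d) (z : α) :
    z ∈ Set.range ⇑(fwdEmb g x hx) ↔ g.SameCycle x z := by
  constructor
  · rintro ⟨k, rfl⟩
    exact ⟨((k : ℕ) : ℤ), by simp [zpow_natCast, fwdEmb_apply]⟩
  · intro h
    obtain ⟨k, hk, rfl⟩ := (sameCycle_iff_exists_lt g x z).1 h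
    exact ⟨⟨k, by rw [← hx]; exact hk⟩, rfl⟩

lemma fwd_invariant (g : Equiv.Perm α) (x : α) (hx : cyl g x = d) :
    ∀ z, (z ∉ Set.range ⇑(fwdEmb g x hx)) ↔ (g z ∉ Set.range ⇑(fwdEmb g x hx)) := by
  intro z
  rw [not_iff_not, fwdEmb_range, fwdEmb_range]
  exact (Equiv.Perm.sameCycle_apply_right).symm

def fwdPerm (g : Equiv.Perm α) (x : α) (hx : cyl g x = d) :
    Equiv.Perm {y : α // y ∉ Set.range ⇑(fwdEmb g x hx)} :=
  g.subtypePerm (fun z => (fwd_invariant g x hx z).symm)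

lemma fwdPerm_hpc {g : Equiv.Perm α} {x : α} (hd : 0 < d) (hj : 1 ≤ j)
    (hg : hpc g d j) (hx : cyl g x = d) : hpc (fwdPerm g x hx) d (j - 1) := by
  unfold hpc
  have hsplit := split_cycle hd hx (Set.range ⇑(fwdEmb g x hx))
    (fun z => fwdEmb_range g x hx z)
  rw [hg] at hsplit
  have he : Nat.card {w : {y : α // y ∉ Set.range ⇑(fwdEmb g x hx)} //
      cyl (g.subtypePerm (fun z => (fwd_invariant g x hx z).symm)) w = d}
      = Nat.card {z : α // cyl g z = d ∧ z ∉ Set.range ⇑(fwdEmb g x hx)} := by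
    refine Nat.card_congr ?_
    refine
      { toFun := fun w => ⟨w.1.1, by
          rw [← cyl_subtypePerm g _ (fwd_invariant g x hx) w.1.1 w.1.2]
          exact ⟨w.2, w.1.2⟩⟩
        invFun := fun z => ⟨⟨z.1, z.2.2⟩, by
          rw [cyl_subtypePerm g _ (fwd_invariant g x hx) z.1 z.2.2]
          exact z.2.1⟩
        left_inv := fun w => by ext; rfl
        right_inv := fun z => by ext; rfl }
  rw [show fwdPerm g x hx = g.subtypePerm (fun z => (fwd_invariant g x hx z).symm) from rfl, he]
  obtain ⟨j', rfl⟩ : ∃ j', j = j' + 1 := ⟨j - 1, by omega⟩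
  rw [Nat.succ_mul] at hsplit
  simp only [Nat.add_sub_cancel]
  omega

noncomputable def bwd (hd : 0 < d) (hj : 1 ≤ j)
    (t : Σ f : Fin d ↪ α, {g' : Equiv.Perm {y : α // y ∉ Set.range ⇑f} // hpc g' d (j - 1)}) :
    {p : Equiv.Perm α × α // hpc p.1 d j ∧ cyl p.1 p.2 = d} :=
  letI : DecidablePred (· ∈ Set.range ⇑t.1) := Classical.decPred _
  ⟨(bwdPerm t.1 t.2.1, t.1 ⟨0, hd⟩),
    bwdPerm_hpc t.1 t.2.1 hd hj t.2.2, bwdPerm_cyl_base t.1 t.2.1 hd⟩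

lemma bwd_bijective (hd : 0 < d) (hj : 1 ≤ j) :
    Function.Bijective (bwd (α := α) (j := j) hd hj) := by
  constructor
  · rintro ⟨f₁, g₁, hg₁⟩ ⟨f₂, g₂, hg₂⟩ h
    letI : DecidablePred (· ∈ Set.range ⇑f₁) := Classical.decPred _
    letI : DecidablePred (· ∈ Set.range ⇑f₂) := Classical.decPred _
    have hval := congrArg Subtype.val h
    have hperm : bwdPerm f₁ g₁ = bwdPerm f₂ g₂ := congrArg Prod.fst hval
    have hx : f₁ ⟨0, hd⟩ = f₂ ⟨0, hd⟩ := congrArg Prod.snd hval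
    have hf : f₁ = f₂ := by
      ext k
      have e1 : f₁ k = (bwdPerm f₁ g₁ ^ (k : ℕ)) (f₁ ⟨0, hd⟩) := by
        rw [bwdPerm_pow f₁ g₁ hd]
        congr 1
        exact Fin.ext (Nat.mod_eq_of_lt k.2).symm
      have e2 : f₂ k = (bwdPerm f₂ g₂ ^ (k : ℕ)) (f₂ ⟨0, hd⟩) := by
        rw [bwdPerm_pow f₂ g₂ hd]
        congr 1
        exact Fin.ext (Nat.mod_eq_of_lt k.2).symm
      rw [e1, e2, hperm, hx]
    subst hf
    have hg : g₁ = g₂ := by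
      apply Equiv.ext
      rintro ⟨y, hy⟩
      apply Subtype.ext
      have h1 := bwdPerm_apply_not_mem f₁ g₁ hy
      have h2 := bwdPerm_apply_not_mem f₁ g₂ hy
      rw [← h1, ← h2, hperm]
    subst hg
    rfl
  · rintro ⟨⟨g, x⟩, hg, hx⟩
    refine ⟨⟨fwdEmb g x hx, ⟨fwdPerm g x hx, fwdPerm_hpc hd hj hg hx⟩⟩, ?_⟩
    letI : DecidablePred (· ∈ Set.range ⇑(fwdEmb g x hx)) := Classical.decPred _
    apply Subtype.ext
    have hfst : bwdPerm (fwdEmb g x hx) (fwdPerm g x hx) = g := by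
      apply Equiv.ext
      intro y
      by_cases hy : y ∈ Set.range ⇑(fwdEmb g x hx)
      · obtain ⟨k, rfl⟩ := hy
        rw [bwdPerm_apply_mem]
        show (g ^ ((finRotate d k : Fin d) : ℕ)) x = g ((g ^ (k : ℕ)) x)
        rw [finRotate_val]
        have hmod : ∀ m : ℕ, (g ^ (m % d)) x = (g ^ m) x := by
          intro m
          rw [← hx]
          exact pow_mod_cyl_apply g x m
        calc (g ^ (((k : ℕ) + 1) % d)) x = (g ^ ((k : ℕ) + 1)) x := hmod _
          _ = g ((g ^ (k : ℕ)) x) := by rw [pow_succ', Equiv.Perm.mul_apply]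
      · rw [bwdPerm_apply_not_mem _ _ hy]
        rfl
    show (bwdPerm (fwdEmb g x hx) (fwdPerm g x hx), fwdEmb g x hx ⟨0, hd⟩) = (g, x)
    rw [hfst]
    have hsnd : fwdEmb g x hx ⟨0, hd⟩ = x := by
      rw [fwdEmb_apply]
      simp
    rw [hsnd]

lemma card_bij (hd : 0 < d) (hj : 1 ≤ j) :
    Nat.card (Σ f : Fin d ↪ α,
        {g' : Equiv.Perm {y : α // y ∉ Set.range ⇑f} // hpc g' d (j - 1)})
      = Nat.card {p : Equiv.Perm α × α // hpc p.1 d j ∧ cyl p.1 p.2 = d} :=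
  Nat.card_eq_of_bijective _ (bwd_bijective hd hj)

end Bij2

section Count

variable {α : Type*} [Fintype α] [DecidableEq α]

lemma card_S (d j : ℕ) :
    Nat.card {p : Equiv.Perm α × α // hpc p.1 d j ∧ cyl p.1 p.2 = d}
      = Nat.card {g : Equiv.Perm α // hpc g d j} * (j * d) := by
  classical
  have e : {p : Equiv.Perm α × α // hpc p.1 d j ∧ cyl p.1 p.2 = d}
      ≃ Σ g : {g : Equiv.Perm α // hpc g d j}, {x : α // cyl g.1 x = d} :=
    { toFun := fun p => ⟨⟨p.1.1, p.2.1⟩, ⟨p.1.2, p.2.2⟩⟩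
      invFun := fun s => ⟨(s.1.1, s.2.1), s.1.2, s.2.2⟩
      left_inv := fun p => rfl
      right_inv := fun s => rfl }
  rw [Nat.card_congr e, Nat.card_eq_fintype_card, Fintype.card_sigma]
  calc ∑ g : {g : Equiv.Perm α // hpc g d j}, Fintype.card {x : α // cyl g.1 x = d}
      = ∑ _g : {g : Equiv.Perm α // hpc g d j}, j * d := by
        refine Finset.sum_congr rfl fun g _ => ?_
        rw [← Nat.card_eq_fintype_card]
        exact g.2
    _ = Nat.card {g : Equiv.Perm α // hpc g d j} * (j * d) := by
        rw [Finset.sum_const, smul_eq_mul, Finset.card_univ, Nat.card_eq_fintype_card]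

lemma card_T (d j : ℕ) :
    Nat.card (Σ f : Fin d ↪ α,
        {g' : Equiv.Perm {y : α // y ∉ Set.range ⇑f} // hpc g' d (j - 1)})
      = (Fintype.card α).descFactorial d
        * Nat.card {g : Equiv.Perm (Fin (Fintype.card α - d)) // hpc g d (j - 1)} := by
  classical
  rw [Nat.card_eq_fintype_card, Fintype.card_sigma]
  have hconst : ∀ f : Fin d ↪ α,
      Fintype.card {g' : Equiv.Perm {y : α // y ∉ Set.range ⇑f} // hpc g' d (j - 1)}
        = Nat.card {g : Equiv.Perm (Fin (Fintype.card α - d)) // hpc g d (j - 1)} := by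
    intro f
    rw [← Nat.card_eq_fintype_card]
    have hc : Fintype.card {y : α // y ∉ Set.range ⇑f} = Fintype.card α - d := by
      rw [Fintype.card_subtype_compl]
      congr 1
      rw [Fintype.card_congr (Equiv.ofInjective ⇑f f.injective).symm, Fintype.card_fin]
    exact card_hpc_congr (Fintype.equivFinOfCardEq hc) d (j - 1)
  rw [Finset.sum_congr rfl fun f _ => hconst f, Finset.sum_const, smul_eq_mul,
    Finset.card_univ, Fintype.card_embedding_eq, Fintype.card_fin]

end Count

noncomputable def MM (d m j : ℕ) : ℕ := Nat.card {g : Equiv.Perm (Fin m) // hpc g d j}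

lemma MM_rec {d : ℕ} (n : ℕ) {j : ℕ} (hd : 0 < d) (hj : 1 ≤ j) :
    MM d n j * (j * d) = n.descFactorial d * MM d (n - d) (j - 1) := by
  have h1 := card_S (α := Fin n) d j
  have h2 := card_T (α := Fin n) d j
  have h3 := card_bij (α := Fin n) (d := d) (j := j) hd hj
  rw [Fintype.card_fin] at h2
  unfold MM
  rw [← h1, ← h3, h2]

lemma MM_sum {d : ℕ} (n : ℕ) (hd : 0 < d) :
    ∑ j ∈ Finset.range (n / d + 1), MM d n j = Nat.factorial n := by
  have := sum_card_hpc (α := Fin n) d hd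
  rwa [Fintype.card_fin] at this

lemma key (d : ℕ) (hd : 1 ≤ d) (a : ℕ → ℝ) (b : ℕ → ℕ → ℝ) (ha0 : a 0 = 0)
    (hb : ∀ i j, 1 ≤ j → j ≤ i →
      b i j = 1 / (Nat.factorial j * d ^ j) * (1 - a (i - j)))
    (ha : ∀ i, 1 ≤ i → a i = ∑ k ∈ Finset.Icc 1 i, b i k) :
    ∀ n : ℕ, ∀ j : ℕ, j ≤ n / d →
      (MM d n j : ℝ) = (Nat.factorial n : ℝ) / (Nat.factorial j * (d : ℝ) ^ j)
        * (1 - a (n / d - j)) := by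
  intro n
  induction n using Nat.strong_induction_on with
  | _ n IH =>
  have hpos : ∀ j : ℕ, 1 ≤ j → j ≤ n / d →
      (MM d n j : ℝ) = (Nat.factorial n : ℝ) / (Nat.factorial j * (d : ℝ) ^ j)
        * (1 - a (n / d - j)) := by
    intro j hj hjd
    have hdn : d ≤ n := (Nat.one_le_div_iff hd).1 (le_trans hj hjd)
    have hsub : n - d < n := by omega
    have hdiv : (n - d) / d = n / d - 1 := by
      have := Nat.div_eq_sub_div hd hdn
      omega
    have hj' : j - 1 ≤ (n - d) / d := by rw [hdiv]; omega
    have hIH := IH (n - d) hsub (j - 1) hj'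
    have hrecR : (MM d n j : ℝ) * ((j : ℝ) * d)
        = (n.descFactorial d : ℝ) * (MM d (n - d) (j - 1) : ℝ) := by
      exact_mod_cast MM_rec n hd hj
    have harg : (n - d) / d - (j - 1) = n / d - j := by rw [hdiv]; omega
    rw [hIH, harg] at hrecR
    have hdesc : (n.descFactorial d : ℝ) = (n.factorial : ℝ) / ((n - d).factorial : ℝ) := by
      rw [eq_div_iff (by exact_mod_cast (Nat.factorial_ne_zero (n - d)))]
      rw [mul_comm]
      exact_mod_cast Nat.factorial_mul_descFactorial hdn
    have hjd0 : ((j : ℝ) * d) ≠ 0 := by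
      have : (0 : ℝ) < (j : ℝ) * d := by
        have : 0 < j * d := Nat.mul_pos hj hd
        exact_mod_cast this
      exact ne_of_gt this
    obtain ⟨j', rfl⟩ : ∃ j', j = j' + 1 := ⟨j - 1, by omega⟩
    have hT : ((Nat.factorial n : ℝ) / (Nat.factorial (j' + 1) * (d : ℝ) ^ (j' + 1))
          * (1 - a (n / d - (j' + 1)))) * (((j' + 1 : ℕ) : ℝ) * d)
        = (n.descFactorial d : ℝ)
          * ((Nat.factorial (n - d) : ℝ) / (Nat.factorial ((j' + 1) - 1) * (d : ℝ) ^ ((j' + 1) - 1))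
            * (1 - a (n / d - (j' + 1)))) := by
      rw [hdesc]
      simp only [Nat.add_sub_cancel, Nat.factorial_succ, pow_succ]
      have h1 : ((n - d).factorial : ℝ) ≠ 0 := by exact_mod_cast Nat.factorial_ne_zero _
      have h2 : ((j').factorial : ℝ) ≠ 0 := by exact_mod_cast Nat.factorial_ne_zero _
      have h3 : (d : ℝ) ≠ 0 := by exact_mod_cast Nat.pos_iff_ne_zero.1 hd
      have h4 : (d : ℝ) ^ j' ≠ 0 := pow_ne_zero _ h3
      have h5 : ((j' : ℝ) + 1) ≠ 0 := by positivity
      push_cast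
      field_simp
    exact mul_right_cancel₀ hjd0 (hrecR.trans hT.symm)
  intro j hjd
  rcases Nat.eq_zero_or_pos j with rfl | hj
  · have hcast : (MM d n 0 : ℝ) + ∑ k ∈ Finset.Icc 1 (n / d), (MM d n k : ℝ)
        = (Nat.factorial n : ℝ) := by
      have h0 : ∑ jj ∈ Finset.range (n / d + 1), (MM d n jj : ℝ) = (Nat.factorial n : ℝ) := by
        exact_mod_cast congrArg (Nat.cast : ℕ → ℝ) (MM_sum n hd)
      rw [Finset.sum_range_succ'] at h0
      rw [← h0, ← Finset.Ico_add_one_right_eq_Icc, Finset.sum_Ico_eq_sum_range]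
      simp only [Nat.add_sub_cancel]
      rw [add_comm]
      congr 1
      exact Finset.sum_congr rfl fun i _ => by rw [Nat.add_comm]
    rcases Nat.eq_zero_or_pos (n / d) with hi0 | hi1
    · rw [hi0] at hcast ⊢
      simp only [Finset.Icc_self, Finset.Icc_eq_empty_of_lt (by omega : (1:ℕ) > 0),
        Finset.sum_empty, add_zero] at hcast
      simp only [Nat.sub_zero, Nat.factorial_zero, pow_zero, Nat.cast_one, one_mul, div_one,
        ha0, sub_zero, mul_one]
      rw [hcast]
    · have hsum2 : ∑ k ∈ Finset.Icc 1 (n / d), (MM d n k : ℝ)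
          = (Nat.factorial n : ℝ) * ∑ k ∈ Finset.Icc 1 (n / d), b (n / d) k := by
        rw [Finset.mul_sum]
        refine Finset.sum_congr rfl fun k hk => ?_
        obtain ⟨hk1, hk2⟩ := Finset.mem_Icc.1 hk
        rw [hpos k hk1 hk2, hb (n / d) k hk1 hk2]
        ring
      rw [hsum2, ← ha (n / d) hi1] at hcast
      simp only [Nat.sub_zero, Nat.factorial_zero, pow_zero, Nat.cast_one, one_mul, div_one]
      linarith [hcast]
  · exact hpos j hj hjd

end StmtAux

/-- Fix `d ≥ 1` and define recursively `a 0 = 0`,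
`b i j = (1/(j! d^j)) * (1 - a (i-j))` for `1 ≤ j ≤ i` and `a i = ∑_{k=1}^i b i k`.
For `n ≥ 1`, `j ≥ 1` with `j ≤ ⌊n/d⌋ =: i`, the number of permutations in `S_n`
whose cycle decomposition contains precisely `j` cycles of length `d` equals
`n! * b i j = (n!/(j! d^j)) * (1 - a (i - j))`. -/
theorem statement3 (d : ℕ) (hd : 1 ≤ d) (a : ℕ → ℝ) (b : ℕ → ℕ → ℝ)
    (ha0 : a 0 = 0)
    (hb : ∀ i j, 1 ≤ j → j ≤ i →
      b i j = 1 / (Nat.factorial j * d ^ j) * (1 - a (i - j)))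
    (ha : ∀ i, 1 ≤ i → a i = ∑ k ∈ Finset.Icc 1 i, b i k)
    (n j : ℕ) (hn : 1 ≤ n) (hj : 1 ≤ j) (hjd : j ≤ n / d) :
    (Nat.card {g : Equiv.Perm (Fin n) // hasPreciselyCycles g d j} : ℝ)
        = Nat.factorial n * b (n / d) j ∧
      (Nat.card {g : Equiv.Perm (Fin n) // hasPreciselyCycles g d j} : ℝ)
        = Nat.factorial n / (Nat.factorial j * d ^ j) * (1 - a (n / d - j)) := by
  have hMM : Nat.card {g : Equiv.Perm (Fin n) // hasPreciselyCycles g d j}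
      = StmtAux.MM d n j :=
    Nat.card_congr (Equiv.subtypeEquivRight fun g => Iff.rfl)
  have hkey := StmtAux.key d hd a b ha0 hb ha n j hjd
  refine ⟨?_, ?_⟩
  · rw [hMM, hkey, hb (n / d) j hj hjd]
    ring
  · rw [hMM, hkey]
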